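/- For every real u > 0 there exists a constant S > 0 such that for all integers g ≥ 0, n ≥ 0 with 2g−2+n > 0 and every integer κ with 0 ≤ κ ≤ D := 3g−3+n: 15^{−(D−κ)} · 6^{−(2g−2+n)} · (4D+1−2κ)!! / ((D−κ)! · 24^g · g!) · (3/2)^{3g−4+2n−κ} · u^{−(5g−5+2n−κ)} ≤ S · (2u/27)^g · P(u)^{D} · D!/g!. -/

import Mathlib

noncomputable section

/-- The function `P` from the upper bound on Painlevé I amplitudes. -/
def Pfun (u : ℝ) : ℝ := if u < 2/5 then 2 / (5 * u^2) else 5 / (10 * u - 2)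

set_option maxHeartbeats 1000000

open Nat Finset

lemma centralBinom_sqrt_le (k : ℕ) :
    (Nat.centralBinom k : ℝ) * Real.sqrt (k + 1) ≤ 4 ^ k := by
  induction k with
  | zero => simp [Nat.centralBinom]
  | succ k ih =>
    have hrec : ((k:ℝ) + 1) * (Nat.centralBinom (k+1) : ℝ)
        = 2 * (2 * k + 1) * (Nat.centralBinom k : ℝ) := by
      exact_mod_cast congrArg (Nat.cast (R := ℝ)) (Nat.succ_mul_centralBinom_succ k)
    have hk1 : (0:ℝ) < (k:ℝ) + 1 := by positivity
    -- key sqrt inequality: (2k+1) * sqrt(k+2) ≤ 2*(k+1)*sqrt(k+1)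
    have hsq : (2 * (k:ℝ) + 1) * Real.sqrt (k + 2) ≤ 2 * ((k:ℝ) + 1) * Real.sqrt (k + 1) := by
      have h1 : (2 * (k:ℝ) + 1) * Real.sqrt (k + 2) = Real.sqrt ((2*(k:ℝ)+1)^2 * (k+2)) := by
        rw [Real.sqrt_mul (by positivity), Real.sqrt_sq (by positivity)]
      have h2 : 2 * ((k:ℝ) + 1) * Real.sqrt (k + 1) = Real.sqrt ((2*((k:ℝ)+1))^2 * (k+1)) := by
        rw [Real.sqrt_mul (by positivity), Real.sqrt_sq (by positivity)]
      rw [h1, h2]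
      apply Real.sqrt_le_sqrt
      nlinarith [sq_nonneg ((k:ℝ))]
    have hcb : (Nat.centralBinom (k+1) : ℝ) = 2 * (2 * k + 1) * (Nat.centralBinom k : ℝ) / ((k:ℝ)+1) := by
      field_simp
      linarith [hrec]
    rw [hcb]
    have hcbnn : (0:ℝ) ≤ (Nat.centralBinom k : ℝ) := by positivity
    push_cast
    rw [div_mul_eq_mul_div, div_le_iff₀ hk1]
    calc 2 * (2 * (k:ℝ) + 1) * (Nat.centralBinom k : ℝ) * Real.sqrt ((k:ℝ) + 1 + 1)
        = (Nat.centralBinom k : ℝ) * (2 * ((2 * (k:ℝ) + 1) * Real.sqrt ((k:ℝ) + 2))) := by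
          ring_nf
      _ ≤ (Nat.centralBinom k : ℝ) * (2 * (2 * ((k:ℝ) + 1) * Real.sqrt ((k:ℝ) + 1))) := by
          apply mul_le_mul_of_nonneg_left _ hcbnn
          have := hsq; nlinarith [this]
      _ = ((Nat.centralBinom k : ℝ) * Real.sqrt ((k:ℝ)+1)) * (4 * ((k:ℝ)+1)) := by ring
      _ ≤ 4 ^ k * (4 * ((k:ℝ)+1)) := by
          apply mul_le_mul_of_nonneg_right _ (by positivity)
          exact_mod_cast ih
      _ = 4 ^ (k+1) * ((k:ℝ) + 1) := by ring


private lemma chain_up {p : ℕ → ℝ} : ∀ M, (∀ i, i < M → p i ≤ p (i+1)) →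
    ∀ i, i ≤ M → p i ≤ p M := by
  intro M
  induction M with
  | zero => intro _ i hi; interval_cases i; exact le_rfl
  | succ M ih =>
    intro key i hi
    rcases Nat.lt_succ_iff_lt_or_eq.mp (Nat.lt_succ_of_le hi) with h | h
    · exact le_trans (ih (fun a ha => key a (by omega)) i (by omega)) (key M (by omega))
    · exact h ▸ le_rfl

private lemma chain_down {p : ℕ → ℝ} {M : ℕ} (key : ∀ i, M ≤ i → p (i+1) ≤ p i) :
    ∀ j, p (M + j) ≤ p M := by
  intro j
  induction j with
  | zero => exact le_rfl
  | succ j ih => exact le_trans (by simpa [← add_assoc] using key (M+j) (by omega)) ih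

lemma pmf_sqrt_le (q : ℝ) (hq0 : 0 < q) (hq2 : q ≤ 1/2) (k m : ℕ) (hm : m ≤ k) :
    (k.choose m : ℝ) * q ^ m * (1 - q) ^ (k - m) * Real.sqrt (k + 1) ≤ 80 / Real.sqrt q := by
  have h1q : (0:ℝ) < 1 - q := by linarith
  set p : ℕ → ℝ := fun m => (k.choose m : ℝ) * q ^ m * (1 - q) ^ (k - m) with hp
  have hpnn : ∀ i, 0 ≤ p i := fun i => by positivity
  have hsum : ∑ i ∈ range (k+1), p i = 1 := by
    have h := add_pow q (1-q) k
    simp only [show q + (1-q) = (1:ℝ) by ring, one_pow] at h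
    rw [show (1:ℝ) = ∑ i ∈ range (k+1), q^i*(1-q)^(k-i)*(k.choose i) from h]
    exact Finset.sum_congr rfl fun i _ => by simp only [hp]; ring
  have hple1 : ∀ i, i ≤ k → p i ≤ 1 := by
    intro i hi
    rw [← hsum]
    exact Finset.single_le_sum (fun j _ => hpnn j) (by simp [Finset.mem_range]; omega)
  have hstep : ∀ i, i < k →
      p (i+1) * (((i:ℝ)+1) * (1-q)) = p i * (((k:ℝ)-(i:ℝ)) * q) := by
    intro i hi
    have hch : ((k.choose (i+1) : ℝ)) * ((i:ℝ)+1) = (k.choose i : ℝ) * ((k:ℝ)-(i:ℝ)) := by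
      have h2 : ((k.choose (i+1) * (i+1) : ℕ) : ℝ) = ((k.choose i * (k - i) : ℕ) : ℝ) :=
        Nat.cast_inj.mpr (Nat.choose_succ_right_eq k i)
      push_cast [Nat.cast_sub (le_of_lt hi)] at h2
      linarith [h2]
    have hexp : k - i = (k - (i+1)) + 1 := by omega
    simp only [hp]
    rw [hexp, pow_succ, pow_succ]
    linear_combination (q^i * (1-q)^(k-(i+1)) * q * (1-q)) * hch
  set m₀ : ℕ := ⌊q * (k+1)⌋₊ with hm₀
  have hm₀le : (m₀:ℝ) ≤ q * (k+1) := Nat.floor_le (by positivity)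
  have hm₀lt : q * (k+1) < (m₀:ℝ) + 1 := Nat.lt_floor_add_one _
  have hm₀k : m₀ ≤ k := by
    have h1 : (m₀:ℝ) < (k:ℝ) + 1 := by nlinarith
    exact_mod_cast Nat.lt_succ_iff.mp (by exact_mod_cast h1)
  -- p is maximized at m₀
  have hmax : ∀ i, i ≤ k → p i ≤ p m₀ := by
    have keyup : ∀ i, i < m₀ → p i ≤ p (i+1) := by
      intro i hi
      have hik : i < k := lt_of_lt_of_le hi hm₀k
      have hid := hstep i hik
      have hle : p i * (((i:ℝ)+1) * (1-q)) ≤ p i * (((k:ℝ)-(i:ℝ)) * q) := by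
        apply mul_le_mul_of_nonneg_left _ (hpnn i)
        have h3 : (i:ℝ) + 1 ≤ (m₀:ℝ) := by exact_mod_cast Nat.succ_le_of_lt hi
        nlinarith
      exact le_of_mul_le_mul_right (hle.trans_eq hid.symm) (by positivity)
    have keydown : ∀ i, m₀ ≤ i → p (i+1) ≤ p i := by
      intro i hi
      rcases Nat.lt_or_ge i k with hik | hik
      · have hid := hstep i hik
        have h3 : (m₀:ℝ) ≤ (i:ℝ) := by exact_mod_cast hi
        have hle : p i * (((k:ℝ)-(i:ℝ)) * q) ≤ p i * (((i:ℝ)+1) * (1-q)) := by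
          apply mul_le_mul_of_nonneg_left _ (hpnn i)
          nlinarith
        exact le_of_mul_le_mul_right (hid.trans_le hle) (by positivity)
      · have : p (i+1) = 0 := by
          simp only [hp]
          rw [Nat.choose_eq_zero_of_lt (by omega)]
          simp
        rw [this]; exact hpnn i
    intro i hi
    rcases le_or_gt i m₀ with h | h
    · exact chain_up m₀ keyup i h
    · have := chain_down keydown (i - m₀)
      rwa [show m₀ + (i - m₀) = i by omega] at this
  have hpm : (k.choose m : ℝ) * q ^ m * (1 - q) ^ (k - m) = p m := by rw [hp]
  rw [hpm]
  clear_value p m₀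
  have hsqnn : (0:ℝ) < Real.sqrt q := Real.sqrt_pos.mpr hq0
  set T : ℝ := q * (1-q) * (k+1) with hT
  have hTpos : 0 < T := by positivity
  have hknn : (0:ℝ) ≤ (k:ℝ) := Nat.cast_nonneg k
  clear_value T
  rcases lt_or_ge T 4 with hT4 | hT4
  · -- small case : sqrt(k+1) is bounded
    have hqk : q * (k+1) < 8 := by nlinarith
    have h9 : Real.sqrt q * Real.sqrt (k+1) ≤ 3 := by
      rw [← Real.sqrt_mul (le_of_lt hq0)]
      calc Real.sqrt (q * (k+1)) ≤ Real.sqrt 9 := Real.sqrt_le_sqrt (by linarith)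
        _ = 3 := by rw [show (9:ℝ) = 3^2 by norm_num, Real.sqrt_sq]; norm_num
    rw [div_eq_mul_inv]
    calc p m * Real.sqrt (k+1) ≤ 1 * Real.sqrt (k+1) :=
          mul_le_mul_of_nonneg_right (hple1 m hm) (Real.sqrt_nonneg _)
      _ = (Real.sqrt q * Real.sqrt (k+1)) * (Real.sqrt q)⁻¹ := by
          field_simp
      _ ≤ 3 * (Real.sqrt q)⁻¹ := by
          apply mul_le_mul_of_nonneg_right h9 (by positivity)
      _ ≤ 80 * (Real.sqrt q)⁻¹ := by
          apply mul_le_mul_of_nonneg_right (by norm_num) (by positivity)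
  · -- main case
    set w : ℕ := ⌊Real.sqrt T⌋₊ with hw
    have hsT : (2:ℝ) ≤ Real.sqrt T := by
      rw [show (2:ℝ) = Real.sqrt 4 by rw [show (4:ℝ) = 2^2 by norm_num, Real.sqrt_sq] <;> norm_num]
      exact Real.sqrt_le_sqrt hT4
    have hw2 : 2 ≤ w := Nat.le_floor hsT
    have hwle : (w:ℝ) ≤ Real.sqrt T := Nat.floor_le (Real.sqrt_nonneg _)
    have hwsq : ((w:ℝ))^2 ≤ T := by
      nlinarith [Real.sq_sqrt (le_of_lt hTpos), Real.sqrt_nonneg T]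
    have hwgt : Real.sqrt T < (w:ℝ) + 1 := Nat.lt_floor_add_one _
    have hwpos : (0:ℝ) < w := by exact_mod_cast lt_of_lt_of_le (by norm_num) hw2
    clear_value w
    -- m₀ + w ≤ k
    have h4T : 4 * T ≤ (k:ℝ) + 1 := by
      rw [hT]
      nlinarith [sq_nonneg (2*q-1), hknn]
    have hk16 : (16:ℝ) ≤ (k:ℝ) + 1 := by linarith
    have hsqk : Real.sqrt T * 2 ≤ Real.sqrt ((k:ℝ)+1) := by
      rw [show Real.sqrt T * 2 = Real.sqrt (T * 2^2) by
            rw [Real.sqrt_mul (le_of_lt hTpos), Real.sqrt_sq] <;> norm_num]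
      apply Real.sqrt_le_sqrt
      linarith
    have hsqk2 : Real.sqrt ((k:ℝ)+1) ≤ (k:ℝ) - 1 := by
      rw [show (k:ℝ) - 1 = Real.sqrt (((k:ℝ)-1)^2) by rw [Real.sqrt_sq]; linarith]
      apply Real.sqrt_le_sqrt
      nlinarith
    have hqk2 : q * ((k:ℝ)+1) ≤ ((k:ℝ)+1)/2 := by nlinarith [hknn]
    have hm₀wk : m₀ + w ≤ k := by
      have h11 : (m₀:ℝ) + (w:ℝ) ≤ (k:ℝ) := by linarith
      exact_mod_cast h11
    set ρ : ℝ := (T - w)/(T + w) with hρ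
    have hTw : (0:ℝ) < T + w := by linarith
    have hTw2 : (0:ℝ) ≤ T - w := by nlinarith
    have hρ0 : 0 ≤ ρ := div_nonneg hTw2 (le_of_lt hTw)
    have hρ1 : ρ ≤ 1 := by rw [hρ, div_le_one hTw]; linarith
    -- step lower bound
    have hstepρ : ∀ i, i < w → p (m₀+i) * ρ ≤ p (m₀+i+1) := by
      intro i hi
      have hik : m₀ + i < k := by omega
      have hid := hstep (m₀+i) hik
      have hi1w : (i:ℝ) + 1 ≤ (w:ℝ) := by exact_mod_cast Nat.succ_le_of_lt hi
      have hcast : ((m₀+i : ℕ):ℝ) = (m₀:ℝ) + (i:ℝ) := by push_cast; ring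
      have hA : (((m₀+i:ℕ):ℝ)+1) * (1-q) ≤ T + w := by rw [hcast]; nlinarith
      have hB : T - w ≤ ((k:ℝ) - ((m₀+i:ℕ):ℝ)) * q := by rw [hcast]; nlinarith
      have h5 : p (m₀+i) * ρ * ((((m₀+i:ℕ):ℝ)+1) * (1-q)) ≤ p (m₀+i+1) * ((((m₀+i:ℕ):ℝ)+1) * (1-q)) := by
        rw [hid]
        have hnn := hpnn (m₀+i)
        calc p (m₀+i) * ρ * ((((m₀+i:ℕ):ℝ)+1) * (1-q))
            ≤ p (m₀+i) * ρ * (T + w) := by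
              apply mul_le_mul_of_nonneg_left hA (by positivity)
          _ = p (m₀+i) * (T - w) := by
              rw [hρ, mul_assoc, div_mul_cancel₀ _ (ne_of_gt hTw)]
          _ ≤ p (m₀+i) * (((k:ℝ) - ((m₀+i:ℕ):ℝ)) * q) := mul_le_mul_of_nonneg_left hB hnn
      exact le_of_mul_le_mul_right h5 (by positivity)
    -- chain
    have hchain : ∀ j, j ≤ w → p m₀ * ρ^j ≤ p (m₀+j) := by
      intro j
      induction j with
      | zero => intro _; simp
      | succ j ih =>
        intro hj
        calc p m₀ * ρ^(j+1) = (p m₀ * ρ^j) * ρ := by ring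
          _ ≤ p (m₀+j) * ρ := mul_le_mul_of_nonneg_right (ih (by omega)) hρ0
          _ ≤ p (m₀+j+1) := hstepρ j (by omega)
    -- ρ^w ≥ 1/55
    have hρw : (1:ℝ)/55 ≤ ρ^w := by
      have hup : (T + w) * w ≤ (T - w) * (w + 4) := by nlinarith
      have hρge : 1/(1 + 4/(w:ℝ)) ≤ ρ := by
        have he : (1:ℝ)/(1 + 4/(w:ℝ)) = w/((w:ℝ)+4) := by
          field_simp
        rw [he, hρ, div_le_div_iff₀ (by positivity) hTw]
        nlinarith [hup]
      have hexp : (1 + 4/(w:ℝ))^w ≤ 55 := by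
        have h8 : (1 + 4/(w:ℝ)) ≤ Real.exp (4/w) := by
          have := Real.add_one_le_exp (4/(w:ℝ))
          linarith
        calc (1 + 4/(w:ℝ))^w ≤ (Real.exp (4/w))^w := by
              apply pow_le_pow_left₀ (by positivity) h8
          _ = Real.exp ((w:ℝ) * (4/w)) := by rw [← Real.exp_nat_mul]
          _ = Real.exp 4 := by
              congr 1
              field_simp
          _ = (Real.exp 1)^(4:ℕ) := by rw [← Real.exp_nat_mul]; norm_num
          _ ≤ (2.7182818286:ℝ)^(4:ℕ) := by
              apply pow_le_pow_left₀ (le_of_lt (Real.exp_pos 1)) (le_of_lt Real.exp_one_lt_d9)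
          _ ≤ 55 := by norm_num
      have h10 : (1:ℝ)/55 ≤ (1/(1 + 4/(w:ℝ)))^w := by
        rw [div_pow, one_pow]
        apply div_le_div_of_nonneg_left (by norm_num) (by positivity) hexp
      calc (1:ℝ)/55 ≤ (1/(1 + 4/(w:ℝ)))^w := h10
        _ ≤ ρ^w := pow_le_pow_left₀ (by positivity) hρge w
    -- sum bound
    have hterm : ∀ i ∈ Finset.Icc m₀ (m₀+w), p m₀ * (1/55) ≤ p i := by
      intro i hi
      rw [Finset.mem_Icc] at hi
      obtain ⟨h1, h2⟩ := hi
      have hj : i = m₀ + (i - m₀) := by omega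
      rw [hj]
      calc p m₀ * (1/55) ≤ p m₀ * ρ^w := mul_le_mul_of_nonneg_left hρw (hpnn m₀)
        _ ≤ p m₀ * ρ^(i-m₀) :=
            mul_le_mul_of_nonneg_left (pow_le_pow_of_le_one hρ0 hρ1 (by omega)) (hpnn m₀)
        _ ≤ p (m₀ + (i-m₀)) := hchain _ (by omega)
    have hsumw : ((w:ℝ)+1) * (p m₀ * (1/55)) ≤ 1 := by
      have hfin : ((w:ℝ)+1) * (p m₀ * (1/55)) ≤ ∑ i ∈ range (k+1), p i := by
        calc ((w:ℝ)+1) * (p m₀ * (1/55))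
            = ∑ _i ∈ Finset.Icc m₀ (m₀+w), p m₀ * (1/55) := by
              rw [Finset.sum_const, Nat.card_Icc, show m₀ + w + 1 - m₀ = w + 1 by omega]
              push_cast
              ring
          _ ≤ ∑ i ∈ Finset.Icc m₀ (m₀+w), p i := Finset.sum_le_sum hterm
          _ ≤ ∑ i ∈ range (k+1), p i := by
              apply Finset.sum_le_sum_of_subset_of_nonneg
              · intro x hx
                rw [Finset.mem_Icc] at hx
                rw [Finset.mem_range]
                omega
              · intro i _ _; exact hpnn i
      rw [hsum] at hfin
      exact hfin
    -- conclude
    have hpm₀ : p m₀ ≤ 55/((w:ℝ)+1) := by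
      rw [le_div_iff₀ (by positivity)]
      nlinarith [hsumw]
    have hsq2 : Real.sqrt q * Real.sqrt ((k:ℝ)+1) ≤ Real.sqrt 2 * ((w:ℝ)+1) := by
      rw [← Real.sqrt_mul (le_of_lt hq0)]
      calc Real.sqrt (q * ((k:ℝ)+1)) ≤ Real.sqrt (2*T) := Real.sqrt_le_sqrt (by nlinarith)
        _ = Real.sqrt 2 * Real.sqrt T := Real.sqrt_mul (by norm_num) T
        _ ≤ Real.sqrt 2 * ((w:ℝ)+1) :=
            mul_le_mul_of_nonneg_left (le_of_lt hwgt) (Real.sqrt_nonneg 2)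
    have hsqrt2 : Real.sqrt 2 ≤ 1.45 := by
      rw [show (1.45:ℝ) = Real.sqrt (1.45^2) from (Real.sqrt_sq (by norm_num)).symm]
      exact Real.sqrt_le_sqrt (by norm_num)
    rw [div_eq_mul_inv]
    calc p m * Real.sqrt ((k:ℝ)+1)
        ≤ (55/((w:ℝ)+1)) * Real.sqrt ((k:ℝ)+1) :=
          mul_le_mul_of_nonneg_right ((hmax m hm).trans hpm₀) (Real.sqrt_nonneg _)
      _ = 55 * (Real.sqrt q * Real.sqrt ((k:ℝ)+1)) / (((w:ℝ)+1) * Real.sqrt q) := by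
          field_simp
          try ring
      _ ≤ 55 * (Real.sqrt 2 * ((w:ℝ)+1)) / (((w:ℝ)+1) * Real.sqrt q) := by
          rw [div_eq_mul_inv, div_eq_mul_inv]
          apply mul_le_mul_of_nonneg_right _ (by positivity)
          exact mul_le_mul_of_nonneg_left hsq2 (by norm_num)
      _ = (55 * Real.sqrt 2) * (Real.sqrt q)⁻¹ := by
          field_simp
          try ring
      _ ≤ 80 * (Real.sqrt q)⁻¹ := by
          apply mul_le_mul_of_nonneg_right _ (by positivity)
          nlinarith [hsqrt2, Real.sqrt_nonneg 2]

lemma core_bound (q : ℝ) (hq0 : 0 < q) (hq2 : q ≤ 1/2) (D m : ℕ) :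
    ((2*(D+m)+1)‼ : ℝ) * q^m * (1-q)^D
      ≤ (160 / Real.sqrt q) * 2^(D+m) * (m ! : ℝ) * (D ! : ℝ) := by
  set k := D + m with hk
  have hmk : m ≤ k := by omega
  have hD : k - m = D := by omega
  have h1q : (0:ℝ) < 1 - q := by linarith
  have hsq : (0:ℝ) < Real.sqrt q := Real.sqrt_pos.mpr hq0
  have hsqne : Real.sqrt q ≠ 0 := ne_of_gt hsq
  set s : ℝ := Real.sqrt ((k:ℝ)+1) with hs
  have hsk : (0:ℝ) < s := Real.sqrt_pos.mpr (by positivity)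
  have hss : s * s = (k:ℝ)+1 := Real.mul_self_sqrt (by positivity)
  -- ℕ identities
  have hfac1 : (2*k+1)! = (2*k+1)‼ * (2^k * k !) := by
    rw [← Nat.doubleFactorial_two_mul]
    exact Nat.factorial_eq_mul_doubleFactorial (2*k)
  have hcb : Nat.centralBinom k * (k ! * k !) = (2*k)! := by
    have h := Nat.choose_mul_factorial_mul_factorial (show k ≤ 2*k by omega)
    rw [Nat.centralBinom]
    rw [show 2*k - k = k by omega] at h
    rw [← h]; ring
  have hfac2 : (2*k+1)! = (2*k+1) * (Nat.centralBinom k * (k ! * k !)) := by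
    rw [hcb, Nat.factorial_succ]
  have hchoose : k ! = k.choose m * (m ! * D !) := by
    have h := Nat.choose_mul_factorial_mul_factorial hmk
    rw [hD] at h
    rw [← h]; ring
  have hkne : ((k ! : ℝ)) ≠ 0 := by positivity
  have hR : ((2*k+1)‼ : ℝ) * 2^k
      = (2*(k:ℝ)+1) * (Nat.centralBinom k : ℝ) * ((k.choose m : ℝ) * ((m ! : ℝ) * (D ! : ℝ))) := by
    have h1 : (((2*k+1)‼ * (2^k * k !) : ℕ) : ℝ) = (((2*k+1) * (Nat.centralBinom k * (k ! * k !)) : ℕ) : ℝ) := by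
      rw [← hfac1, ← hfac2]
    have h3 : ((k ! : ℕ) : ℝ) = (k.choose m : ℝ) * ((m ! : ℝ) * (D ! : ℝ)) := by
      exact_mod_cast congrArg (Nat.cast (R := ℝ)) hchoose
    push_cast at h1
    apply mul_right_cancel₀ hkne
    linear_combination ((2*(k:ℝ)+1) * (Nat.centralBinom k : ℝ) * ((k !: ℕ) : ℝ)) * h3 + h1
  -- analytic bounds
  have hA : (Nat.centralBinom k : ℝ) * s ≤ 4^k := centralBinom_sqrt_le k
  have hB : ((k.choose m : ℝ) * q^m * (1-q)^D * s) * Real.sqrt q ≤ 80 := by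
    have h := pmf_sqrt_le q hq0 hq2 k m hmk
    rw [hD] at h
    rw [← le_div_iff₀ hsq]
    exact h
  have key1 : (Nat.centralBinom k : ℝ) * ((k.choose m : ℝ) * q^m * (1-q)^D) * (Real.sqrt q * ((k:ℝ)+1))
      ≤ 4^k * 80 := by
    have hprod := mul_le_mul hA hB
      (by positivity) (by positivity)
    calc (Nat.centralBinom k : ℝ) * ((k.choose m : ℝ) * q^m * (1-q)^D) * (Real.sqrt q * ((k:ℝ)+1))
        = ((Nat.centralBinom k : ℝ) * s) * (((k.choose m : ℝ) * q^m * (1-q)^D * s) * Real.sqrt q) := by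
          linear_combination ((Nat.centralBinom k : ℝ) * ((k.choose m : ℝ) * q^m * (1-q)^D) * Real.sqrt q) * hss.symm
      _ ≤ 4^k * 80 := hprod
  -- assemble
  have hmain : (((2*k+1)‼ : ℝ) * q^m * (1-q)^D) * (2^k * (Real.sqrt q * ((k:ℝ)+1)))
      ≤ ((160 / Real.sqrt q) * 2^k * (m ! : ℝ) * (D ! : ℝ)) * (2^k * (Real.sqrt q * ((k:ℝ)+1))) := by
    have e1 : (((2*k+1)‼ : ℝ) * q^m * (1-q)^D) * (2^k * (Real.sqrt q * ((k:ℝ)+1)))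
        = (2*(k:ℝ)+1) * ((m ! : ℝ) * (D ! : ℝ)) *
            ((Nat.centralBinom k : ℝ) * ((k.choose m : ℝ) * q^m * (1-q)^D) * (Real.sqrt q * ((k:ℝ)+1))) := by
      linear_combination (q^m * (1-q)^D * (Real.sqrt q * ((k:ℝ)+1))) * hR
    have e2 : ((160 / Real.sqrt q) * 2^k * (m ! : ℝ) * (D ! : ℝ)) * (2^k * (Real.sqrt q * ((k:ℝ)+1)))
        = (2*((k:ℝ)+1)) * ((m ! : ℝ) * (D ! : ℝ)) * (4^k * 80) := by
      have h4 : (4:ℝ)^k = 2^k * 2^k := by rw [← mul_pow]; norm_num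
      rw [h4, div_eq_mul_inv]
      linear_combination (160 * 2^k * (m ! : ℝ) * (D ! : ℝ) * 2^k * ((k:ℝ)+1)) * mul_inv_cancel₀ hsqne
    rw [e1, e2]
    have h5 : (2*(k:ℝ)+1) * ((m ! : ℝ) * (D ! : ℝ)) *
            ((Nat.centralBinom k : ℝ) * ((k.choose m : ℝ) * q^m * (1-q)^D) * (Real.sqrt q * ((k:ℝ)+1)))
        ≤ (2*(k:ℝ)+1) * ((m ! : ℝ) * (D ! : ℝ)) * (4^k * 80) :=
      mul_le_mul_of_nonneg_left key1 (by positivity)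
    apply le_trans h5
    apply mul_le_mul_of_nonneg_right _ (by positivity)
    apply mul_le_mul_of_nonneg_right _ (by positivity)
    have : (0:ℝ) ≤ (k:ℝ) := Nat.cast_nonneg k
    linarith
  exact le_of_mul_le_mul_right hmain (by positivity)

lemma key_bound (u : ℝ) (hu : 0 < u) (D m : ℕ) (hm : m ≤ D) :
    ((2*(D+m)+1)‼ : ℝ)
      ≤ (8*u/3) * (60*(Real.sqrt (5*u)+2)/u) * (4*u*Pfun u)^D * (10*u)^m * (m ! : ℝ) * (D ! : ℝ) := by
  have hune : u ≠ 0 := ne_of_gt hu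
  have hs5 : 0 < Real.sqrt (5*u) := Real.sqrt_pos.mpr (by linarith)
  have hfact : (8*u/3) * (60*(Real.sqrt (5*u)+2)/u) = 160*(Real.sqrt (5*u)+2) := by
    field_simp
    ring
  have hfactnn : (0:ℝ) ≤ (m ! : ℝ) * (D ! : ℝ) := by positivity
  rcases lt_or_ge u (2/5) with hcase | hcase
  · -- u < 2/5 : use q = 1/2
    have hPdef : Pfun u = 2/(5*u^2) := if_pos hcase
    have hcore := core_bound (1/2) (by norm_num) (by norm_num) D m
    have hsqhalf : (0.7:ℝ) ≤ Real.sqrt (1/2) := by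
      rw [show (0.7:ℝ) = Real.sqrt (0.49) by
            rw [show (0.49:ℝ) = 0.7^2 by norm_num, Real.sqrt_sq]; norm_num]
      exact Real.sqrt_le_sqrt (by norm_num)
    have hconst : 160 / Real.sqrt (1/2) ≤ 229 := by
      rw [div_le_iff₀ (by positivity)]
      nlinarith
    have hX : (0:ℝ) < ((1:ℝ)/2)^m * ((1:ℝ)/2)^D := by positivity
    apply le_of_mul_le_mul_right _ hX
    have hup : ((2*(D+m)+1)‼ : ℝ) * (((1:ℝ)/2)^m * ((1:ℝ)/2)^D)
        ≤ 229 * (2^(D+m) * ((m ! : ℝ) * (D ! : ℝ))) := by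
      have hd1 : ((2*(D+m)+1)‼ : ℝ) * (((1:ℝ)/2)^m * ((1:ℝ)/2)^D)
          = ((2*(D+m)+1)‼ : ℝ) * ((1:ℝ)/2)^m * (1-(1:ℝ)/2)^D := by norm_num; ring
      rw [hd1]
      apply le_trans hcore
      have h2 : (0:ℝ) ≤ 2^(D+m) * ((m ! : ℝ) * (D ! : ℝ)) := by positivity
      calc 160 / Real.sqrt (1/2) * 2^(D+m) * (m ! : ℝ) * (D ! : ℝ)
          = (160 / Real.sqrt (1/2)) * (2^(D+m) * ((m ! : ℝ) * (D ! : ℝ))) := by ring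
        _ ≤ 229 * (2^(D+m) * ((m ! : ℝ) * (D ! : ℝ))) := mul_le_mul_of_nonneg_right hconst h2
    apply le_trans hup
    have hmul4 : ((4:ℝ)/(5*u)) * (5*u) = 4 := by field_simp
    have hgt1 : (1:ℝ) ≤ 2/(5*u) := by
      rw [le_div_iff₀ (by linarith)]; linarith
    have hpow : (2:ℝ)^(D+m) ≤ (4/(5*u))^D * (5*u)^m := by
      calc (2:ℝ)^(D+m) = 2^(D-m) * 4^m := by
            rw [show D + m = (D-m) + 2*m by omega, pow_add, pow_mul]
            norm_num
        _ ≤ (2/(5*u))^(D-m) * (2^(D-m) * 4^m) := by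
            apply le_mul_of_one_le_left (by positivity) (one_le_pow₀ hgt1)
        _ = ((2/(5*u)) * 2)^(D-m) * 4^m := by rw [mul_pow]; ring
        _ = (4/(5*u))^(D-m) * ((4/(5*u))^m * (5*u)^m) := by
            rw [← mul_pow, hmul4, show (2:ℝ)/(5*u)*2 = 4/(5*u) by ring]
        _ = (4/(5*u))^D * (5*u)^m := by
            rw [← mul_assoc, ← pow_add, show D-m+m = D by omega]
    have e1 : (8*u/3) * (60*(Real.sqrt (5*u)+2)/u) * (4*u*Pfun u)^D * (10*u)^m * (m ! : ℝ) * (D ! : ℝ)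
          * (((1:ℝ)/2)^m * ((1:ℝ)/2)^D)
        = (160*(Real.sqrt (5*u)+2)) * ((4/(5*u))^D * (5*u)^m) * ((m ! : ℝ) * (D ! : ℝ)) := by
      have hPu : 4*u*Pfun u * (1/2) = 4/(5*u) := by
        rw [hPdef]; field_simp
      have h10 : 10*u * ((1:ℝ)/2) = 5*u := by ring
      calc (8*u/3) * (60*(Real.sqrt (5*u)+2)/u) * (4*u*Pfun u)^D * (10*u)^m * (m ! : ℝ) * (D ! : ℝ)
            * (((1:ℝ)/2)^m * ((1:ℝ)/2)^D)
          = ((8*u/3) * (60*(Real.sqrt (5*u)+2)/u)) * ((4*u*Pfun u) * ((1:ℝ)/2))^D * ((10*u) * ((1:ℝ)/2))^m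
              * ((m ! : ℝ) * (D ! : ℝ)) := by
            rw [mul_pow (4*u*Pfun u) ((1:ℝ)/2) D, mul_pow (10*u) ((1:ℝ)/2) m]
            ring
        _ = (160*(Real.sqrt (5*u)+2)) * ((4/(5*u))^D * (5*u)^m) * ((m ! : ℝ) * (D ! : ℝ)) := by
            rw [hfact, hPu, h10]
            ring
    rw [e1]
    have h320 : (229:ℝ) ≤ 160*(Real.sqrt (5*u)+2) := by nlinarith
    calc 229 * (2^(D+m) * ((m ! : ℝ) * (D ! : ℝ)))
        = (229 * 2^(D+m)) * ((m ! : ℝ) * (D ! : ℝ)) := by ring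
      _ ≤ ((160*(Real.sqrt (5*u)+2)) * ((4/(5*u))^D * (5*u)^m)) * ((m ! : ℝ) * (D ! : ℝ)) := by
          apply mul_le_mul_of_nonneg_right _ hfactnn
          exact mul_le_mul h320 hpow (by positivity) (by linarith)
  · -- u ≥ 2/5 : use q = 1/(5u)
    have hPdef : Pfun u = 5/(10*u-2) := if_neg (not_lt.mpr hcase)
    have h5u : (2:ℝ) ≤ 5*u := by linarith
    have h10u2 : (0:ℝ) < 10*u - 2 := by linarith
    set q : ℝ := 1/(5*u) with hqdef
    have hq0 : 0 < q := by positivity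
    have hq2 : q ≤ 1/2 := by
      rw [hqdef, div_le_div_iff₀ (by linarith) (by norm_num)]
      linarith
    have h1mq : 0 < 1 - q := by
      have : q ≤ 1/2 := hq2
      linarith
    have hcore := core_bound q hq0 hq2 D m
    have h10q : 10*u * q = 2 := by rw [hqdef]; field_simp; ring
    have hPq : (4*u*Pfun u) * (1-q) = 2 := by
      rw [hPdef, hqdef]; linear_combination 2 * mul_inv_cancel₀ h10u2.ne' - 4 * (10*u-2)⁻¹ * mul_inv_cancel₀ hune
    have hconst2 : 160/Real.sqrt q = 160*Real.sqrt (5*u) := by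
      rw [hqdef, one_div, Real.sqrt_inv]
      field_simp
    have hX : (0:ℝ) < q^m * (1-q)^D := by positivity
    apply le_of_mul_le_mul_right _ hX
    have hup : ((2*(D+m)+1)‼ : ℝ) * (q^m * (1-q)^D)
        ≤ (160*(Real.sqrt (5*u)+2)) * 2^(D+m) * ((m ! : ℝ) * (D ! : ℝ)) := by
      calc ((2*(D+m)+1)‼ : ℝ) * (q^m * (1-q)^D)
          = ((2*(D+m)+1)‼ : ℝ) * q^m * (1-q)^D := by ring
        _ ≤ 160/Real.sqrt q * 2^(D+m) * (m ! : ℝ) * (D ! : ℝ) := hcore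
        _ = (160*Real.sqrt (5*u)) * 2^(D+m) * ((m ! : ℝ) * (D ! : ℝ)) := by rw [hconst2]; ring
        _ ≤ (160*(Real.sqrt (5*u)+2)) * 2^(D+m) * ((m ! : ℝ) * (D ! : ℝ)) := by
            apply mul_le_mul_of_nonneg_right _ hfactnn
            apply mul_le_mul_of_nonneg_right _ (by positivity)
            nlinarith
    apply le_trans hup
    have e1 : (8*u/3) * (60*(Real.sqrt (5*u)+2)/u) * (4*u*Pfun u)^D * (10*u)^m * (m ! : ℝ) * (D ! : ℝ)
          * (q^m * (1-q)^D)
        = (160*(Real.sqrt (5*u)+2)) * 2^(D+m) * ((m ! : ℝ) * (D ! : ℝ)) := by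
      calc (8*u/3) * (60*(Real.sqrt (5*u)+2)/u) * (4*u*Pfun u)^D * (10*u)^m * (m ! : ℝ) * (D ! : ℝ)
            * (q^m * (1-q)^D)
          = ((8*u/3) * (60*(Real.sqrt (5*u)+2)/u)) * ((4*u*Pfun u) * (1-q))^D * ((10*u) * q)^m
              * ((m ! : ℝ) * (D ! : ℝ)) := by
            rw [mul_pow (4*u*Pfun u) (1-q) D, mul_pow (10*u) q m]
            ring
        _ = (160*(Real.sqrt (5*u)+2)) * (2^D * 2^m) * ((m ! : ℝ) * (D ! : ℝ)) := by
            rw [hfact, hPq, h10q]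
            ring
        _ = (160*(Real.sqrt (5*u)+2)) * 2^(D+m) * ((m ! : ℝ) * (D ! : ℝ)) := by
            rw [← pow_add]
    rw [e1]

lemma assemble (u : ℝ) (hu : 0 < u) (c : ℝ) (D m N g n : ℕ) (hN1 : 1 ≤ N)
    (hDN : D + 1 = N + g) (hnN : n + 2*g = N + 2) (hP0 : 0 < Pfun u) :
    (8*u/3) * c * (4*u*Pfun u)^D * (10*u)^m * (m ! : ℝ) * (D ! : ℝ) *
      (((15:ℝ)^m)⁻¹ * ((6:ℝ)^N)⁻¹ / ((m ! : ℝ) * 24^g * (g ! : ℝ)) * (((3:ℝ)/2)^(m+n) * (2/3)) * (u^(m+N))⁻¹)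
    = c * (2*u/27)^g * Pfun u^D * (D ! : ℝ) / (g ! : ℝ) := by
  have hune : u ≠ 0 := ne_of_gt hu
  set P := Pfun u with hP
  have hPne : P ≠ 0 := ne_of_gt hP0
  have hmne : (m ! : ℝ) ≠ 0 := by positivity
  have hgne : (g ! : ℝ) ≠ 0 := by positivity
  obtain ⟨N', rfl⟩ : ∃ N', N = N' + 1 := ⟨N - 1, by omega⟩
  have hD : D = N' + g := by omega
  subst hD
  have h4up : ∀ e : ℕ, (4*u*P)^e = 2^e*(2^e*(u^e*P^e)) := fun e => by
    rw [show (4:ℝ)*u*P = 2*(2*(u*P)) by ring, mul_pow, mul_pow, mul_pow]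
  have hXdef : (3:ℝ)^n = ((2:ℝ)^n * ((2:ℝ)^g)^2 * (3:ℝ)^N' * 27) / (((3:ℝ)^g)^2 * (2:ℝ)^N' * 8) := by
    rw [eq_div_iff (by positivity)]
    rw [show ((2:ℝ)^n * ((2:ℝ)^g)^2 * (3:ℝ)^N' * 27) = (2:ℝ)^(n+g*2) * ((3:ℝ)^N' * 27) from by
          rw [pow_add, pow_mul]; ring]
    rw [show (3:ℝ)^n * (((3:ℝ)^g)^2 * (2:ℝ)^N' * 8) = (3:ℝ)^(n+g*2) * ((2:ℝ)^N' * 8) from by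
          rw [pow_add, pow_mul]; ring]
    rw [show n + g*2 = N'+3 by omega]
    rw [pow_add, pow_add]
    norm_num
    ring
  rw [pow_add (4*u*P) N' g, h4up N', h4up g]
  rw [show ((10:ℝ)*u)^m = 2^m*(5^m*u^m) from by rw [show (10:ℝ)*u = 2*(5*u) by ring, mul_pow, mul_pow]]
  rw [show ((15:ℝ))^m = 3^m*5^m from by rw [← mul_pow]; norm_num]
  rw [pow_succ (6:ℝ) N']
  rw [show ((6:ℝ))^N' = 2^N'*3^N' from by rw [← mul_pow]; norm_num]
  rw [show ((24:ℝ))^g = 2^g*(2^g*(2^g*3^g)) from by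
        rw [show (24:ℝ) = 2*(2*(2*3)) by norm_num, mul_pow, mul_pow, mul_pow]]
  rw [show ((3:ℝ)/2)^(m+n) = (3^m*3^n)/(2^m*2^n) from by rw [div_pow, pow_add, pow_add]]
  rw [show u^(m+(N'+1)) = u^m*(u^N'*u) from by rw [pow_add, pow_succ]]
  rw [show ((2:ℝ)*u/27)^g = ((2:ℝ)^g*u^g)/((3:ℝ)^g*((3:ℝ)^g*(3:ℝ)^g)) from by
        rw [div_pow, mul_pow, show (27:ℝ) = 3*(3*3) by norm_num, mul_pow, mul_pow]]
  rw [hXdef]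
  have h2m : (2:ℝ)^m ≠ 0 := by positivity
  have h3m : (3:ℝ)^m ≠ 0 := by positivity
  have h5m : (5:ℝ)^m ≠ 0 := by positivity
  have h2n : (2:ℝ)^n ≠ 0 := by positivity
  have h2N : (2:ℝ)^N' ≠ 0 := by positivity
  have h3N : (3:ℝ)^N' ≠ 0 := by positivity
  have h2g : (2:ℝ)^g ≠ 0 := by positivity
  have h3g : (3:ℝ)^g ≠ 0 := by positivity
  have hum : u^m ≠ 0 := by positivity
  have huN : u^N' ≠ 0 := by positivity
  have hug : u^g ≠ 0 := by positivity
  field_simp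
  ring

/-- each term of Aggarwal's bound applied to the Painlevé I amplitudes is
dominated by `S (2u/27)^g P(u)^D D!/g!` with `D = 3g - 3 + n`. -/
theorem stmt_10 (u : ℝ) (hu : 0 < u) :
    ∃ S : ℝ, 0 < S ∧
      ∀ g n : ℕ, 2 < 2 * g + n → ∀ κ : ℕ, κ ≤ 3 * g + n - 3 →
        ((15 : ℝ) ^ (3 * g + n - 3 - κ))⁻¹ * ((6 : ℝ) ^ (2 * g + n - 2))⁻¹ *
            (Nat.doubleFactorial (4 * (3 * g + n - 3) + 1 - 2 * κ) : ℝ) /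
              ((Nat.factorial (3 * g + n - 3 - κ) : ℝ) * 24 ^ g * (Nat.factorial g : ℝ)) *
            ((3 : ℝ) / 2) ^ (3 * (g : ℤ) + 2 * n - 4 - κ) *
            u ^ (-(5 * (g : ℤ) + 2 * n - 5 - κ))
          ≤ S * (2 * u / 27) ^ g * Pfun u ^ (3 * g + n - 3) *
              (Nat.factorial (3 * g + n - 3) : ℝ) / (Nat.factorial g : ℝ) := by
  have hP0 : 0 < Pfun u := by
    rw [Pfun]
    split_ifs with h
    · positivity
    · have h1 : (2:ℝ)/5 ≤ u := not_lt.mp h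
      have h2 : (0:ℝ) < 10*u-2 := by linarith
      positivity
  refine ⟨60*(Real.sqrt (5*u)+2)/u, by positivity, ?_⟩
  intro g n hgn κ hκ
  obtain ⟨D, hD⟩ : ∃ D, 3*g+n-3 = D := ⟨_, rfl⟩
  obtain ⟨N, hN⟩ : ∃ N, 2*g+n-2 = N := ⟨_, rfl⟩
  rw [hD] at hκ
  rw [hD, hN]
  obtain ⟨m, hm⟩ : ∃ m, D - κ = m := ⟨_, rfl⟩
  rw [hm]
  rw [show 4*D+1-2*κ = 2*(D+m)+1 from by omega]
  rw [show 3 * (g:ℤ) + 2 * (n:ℤ) - 4 - (κ:ℤ) = (m:ℤ)+(n:ℤ)-1 from by omega]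
  rw [show -(5 * (g:ℤ) + 2 * (n:ℤ) - 5 - (κ:ℤ)) = -((m:ℤ)+(N:ℤ)) from by omega]
  rw [show ((3:ℝ)/2)^((m:ℤ)+(n:ℤ)-1) = ((3:ℝ)/2)^(m+n) * (2/3) from by
        rw [show (m:ℤ)+(n:ℤ)-1 = ((m+n:ℕ):ℤ) + (-1) from by push_cast; ring]
        rw [zpow_add₀ (by norm_num : ((3:ℝ)/2) ≠ 0), zpow_natCast, zpow_neg_one]
        norm_num]
  rw [show u^(-((m:ℤ)+(N:ℤ))) = (u^(m+N))⁻¹ from by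
        rw [show (m:ℤ)+(N:ℤ) = ((m+N:ℕ):ℤ) from by push_cast; ring, zpow_neg, zpow_natCast]]
  have hmD : m ≤ D := by omega
  have hN1 : 1 ≤ N := by omega
  have hDN : D + 1 = N + g := by omega
  have hnN : n + 2*g = N + 2 := by omega
  have hEnn : (0:ℝ) ≤ ((15:ℝ)^m)⁻¹ * ((6:ℝ)^N)⁻¹ / ((m ! : ℝ) * 24^g * (g ! : ℝ)) *
      (((3:ℝ)/2)^(m+n) * (2/3)) * (u^(m+N))⁻¹ := by positivity
  calc ((15:ℝ)^m)⁻¹ * ((6:ℝ)^N)⁻¹ * ((2*(D+m)+1)‼ : ℝ) / ((m ! : ℝ) * 24^g * (g ! : ℝ)) *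
          (((3:ℝ)/2)^(m+n) * (2/3)) * (u^(m+N))⁻¹
      = ((2*(D+m)+1)‼ : ℝ) *
          (((15:ℝ)^m)⁻¹ * ((6:ℝ)^N)⁻¹ / ((m ! : ℝ) * 24^g * (g ! : ℝ)) *
            (((3:ℝ)/2)^(m+n) * (2/3)) * (u^(m+N))⁻¹) := by ring
    _ ≤ ((8*u/3) * (60*(Real.sqrt (5*u)+2)/u) * (4*u*Pfun u)^D * (10*u)^m * (m ! : ℝ) * (D ! : ℝ)) *
          (((15:ℝ)^m)⁻¹ * ((6:ℝ)^N)⁻¹ / ((m ! : ℝ) * 24^g * (g ! : ℝ)) *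
            (((3:ℝ)/2)^(m+n) * (2/3)) * (u^(m+N))⁻¹) :=
        mul_le_mul_of_nonneg_right (key_bound u hu D m hmD) hEnn
    _ = (60*(Real.sqrt (5*u)+2)/u) * (2*u/27)^g * Pfun u^D * (D ! : ℝ) / (g ! : ℝ) :=
        assemble u hu _ D m N g n hN1 hDN hnN hP0

end
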